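/- Let n ≥ t + 1 ≥ 2 and k₊ ≥ k₋ ≥ 0 be integers with k₊ and k₋ not both 0. If ∑_{i=0}^{t} C(n,i)·(k₊+k₋)^i < (k₊+1)^{t+1} − (k₊−k₋)^{t+1}, then there is no set T ⊆ ℤⁿ such that the error-ball B(n,t,k₊,k₋) tiles ℤⁿ by T. -/

import Mathlib

open Finset

/-- Hamming weight of an integer vector: the number of nonzero entries. -/
def wt {n : ℕ} (x : Fin n → ℤ) : ℕ := (Finset.univ.filter (fun i => x i ≠ 0)).card

/-- The `(n,t,k₊,k₋)`-error-ball in `ℤⁿ`. -/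
def errBall (n t : ℕ) (kp km : ℤ) : Set (Fin n → ℤ) :=
  {x | (∀ i, -km ≤ x i ∧ x i ≤ kp) ∧ wt x ≤ t}

/-- `Tiles B T` : every `z ∈ ℤⁿ` is uniquely `z = v + b` with `v ∈ T` and `b ∈ B`. -/
def Tiles {n : ℕ} (B T : Set (Fin n → ℤ)) : Prop :=
  ∀ z : Fin n → ℤ, ∃! p : (Fin n → ℤ) × (Fin n → ℤ),
    p.1 ∈ T ∧ p.2 ∈ B ∧ z = p.1 + p.2

lemma filter_val_lt_card {n N : ℕ} (h : N ≤ n) :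
    ((univ : Finset (Fin n)).filter fun i : Fin n => (i : ℕ) < N).card = N := by
  have he : ((univ : Finset (Fin n)).filter fun i : Fin n => (i : ℕ) < N)
      = Finset.image (Fin.castLE h) univ := by
    ext i
    simp only [mem_filter, mem_univ, true_and, mem_image]
    constructor
    · intro hi; exact ⟨⟨i, hi⟩, rfl⟩
    · rintro ⟨j, -, rfl⟩; exact j.isLt
  rw [he, Finset.card_image_of_injective _ (Fin.castLE_injective h), card_univ, Fintype.card_fin]

lemma wt_le_of_subset {n : ℕ} {x : Fin n → ℤ} {s : Finset (Fin n)}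
    (h : ∀ i, x i ≠ 0 → i ∈ s) : wt x ≤ s.card :=
  Finset.card_le_card (fun i hi => h i (Finset.mem_filter.mp hi).2)

lemma inj_aux {a b : ℤ} (ha : a ≠ 0) (hb : b ≠ 0)
    (h : (if a < 0 then a + 1 else a) = (if b < 0 then b + 1 else b)) : a = b := by
  split_ifs at h <;> omega

lemma card_ball_le (n t : ℕ) (kp km : ℤ) (hkm : 0 ≤ km) (hkp : km ≤ kp) :
    ((Finset.Icc (fun _ => -km : Fin n → ℤ) (fun _ => kp)).filter fun x => wt x ≤ t).card
      ≤ ∑ i ∈ Finset.range (t+1), n.choose i * (kp + km).toNat ^ i := by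
  classical
  set Bs := ((Finset.Icc (fun _ => -km : Fin n → ℤ) (fun _ => kp)).filter fun x => wt x ≤ t) with hBs
  set P := (univ : Finset (Fin n)).powerset.filter (fun s => s.card ≤ t) with hP
  have hmap : ∀ x ∈ Bs, (univ.filter fun i => x i ≠ 0) ∈ P := by
    intro x hx
    simp only [hP, mem_filter, mem_powerset]
    exact ⟨Finset.filter_subset _ _ |>.trans (le_refl _), (Finset.mem_filter.mp hx).2⟩
  have h1 : Bs.card = ∑ s ∈ P, (Bs.filter fun x => (univ.filter fun i => x i ≠ 0) = s).card :=
    Finset.card_eq_sum_card_fiberwise hmap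
  have h2 : ∀ s ∈ P, (Bs.filter fun x => (univ.filter fun i => x i ≠ 0) = s).card ≤ (kp+km).toNat ^ s.card := by
    intro s hs
    set lo : Fin n → ℤ := fun i => if i ∈ s then -km + 1 else 0 with hlo
    set hi : Fin n → ℤ := fun i => if i ∈ s then kp else 0 with hhi
    have hfs : (univ.filter fun i : Fin n => i ∈ s) = s := by ext i; simp
    have hcard : (Finset.Icc lo hi).card = (kp+km).toNat ^ s.card := by
      rw [Pi.card_Icc]
      have hc : ∀ i : Fin n, (Finset.Icc (lo i) (hi i)).card = if i ∈ s then (kp+km).toNat else 1 := by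
        intro i
        rw [Int.card_Icc]
        simp only [hlo, hhi]
        split
        · congr 1; ring
        · norm_num
      rw [Finset.prod_congr rfl fun i _ => hc i, ← Finset.prod_filter, Finset.prod_const, hfs]
    rw [← hcard]
    apply Finset.card_le_card_of_injOn (fun x i => if x i < 0 then x i + 1 else x i)
    · intro x hx
      obtain ⟨hxB, hxs⟩ := Finset.mem_filter.mp hx
      obtain ⟨hxI, -⟩ := Finset.mem_filter.mp hxB
      rw [Finset.mem_Icc] at hxI; rw [Finset.mem_coe, Finset.mem_Icc]
      have hbd : ∀ i, -km ≤ x i ∧ x i ≤ kp := fun i => ⟨hxI.1 i, hxI.2 i⟩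
      have hsupp : ∀ i, x i ≠ 0 ↔ i ∈ s := by intro i; rw [← hxs]; simp
      rw [Pi.le_def, Pi.le_def]
      constructor
      · intro i
        have h := hbd i
        simp only [hlo]
        beta_reduce
        by_cases hmem : i ∈ s
        · have := (hsupp i).mpr hmem
          simp only [hmem, if_pos]
          split_ifs with hc <;> (clear * - h this hc hkm hkp; omega)
        · have : x i = 0 := by by_contra hc; exact hmem ((hsupp i).mp hc)
          simp [hmem, this]
      · intro i
        have h := hbd i
        simp only [hhi]
        beta_reduce
        by_cases hmem : i ∈ s
        · have := (hsupp i).mpr hmem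
          simp only [hmem, if_pos]
          split_ifs with hc <;> (clear * - h this hc hkm hkp; omega)
        · have : x i = 0 := by by_contra hc; exact hmem ((hsupp i).mp hc)
          simp [hmem, this]
    · intro x hx y hy hxy
      obtain ⟨hxB, hxs⟩ := Finset.mem_filter.mp hx
      obtain ⟨hyB, hys⟩ := Finset.mem_filter.mp hy
      have hsx : ∀ i, x i ≠ 0 ↔ i ∈ s := by intro i; rw [← hxs]; simp
      have hsy : ∀ i, y i ≠ 0 ↔ i ∈ s := by intro i; rw [← hys]; simp
      funext i
      have hi := congrFun hxy i
      beta_reduce at hi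
      by_cases hmem : i ∈ s
      · have h1 := (hsx i).mpr hmem
        have h2 := (hsy i).mpr hmem
        exact inj_aux h1 h2 hi
      · have h1 : x i = 0 := by by_contra hc; exact hmem ((hsx i).mp hc)
        have h2 : y i = 0 := by by_contra hc; exact hmem ((hsy i).mp hc)
        rw [h1, h2]
  have hmaps : ∀ s ∈ P, s.card ∈ Finset.range (t+1) := by
    intro s hs
    simp only [hP, mem_filter] at hs
    simp only [Finset.mem_range]
    exact Nat.lt_succ_of_le hs.2
  calc Bs.card = ∑ s ∈ P, (Bs.filter fun x => (univ.filter fun i => x i ≠ 0) = s).card := h1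
    _ ≤ ∑ s ∈ P, (kp+km).toNat ^ s.card := Finset.sum_le_sum h2
    _ = ∑ i ∈ Finset.range (t+1), ∑ s ∈ P.filter (fun s => s.card = i), (kp+km).toNat ^ s.card := by
        rw [Finset.sum_fiberwise_of_maps_to hmaps]
    _ = ∑ i ∈ Finset.range (t+1), n.choose i * (kp + km).toNat ^ i := by
        apply Finset.sum_congr rfl
        intro i hi
        have hit : i ≤ t := by simpa [Nat.lt_succ_iff] using hi
        have hPf : P.filter (fun s => s.card = i) = Finset.powersetCard i univ := by
          ext s
          simp only [hP, Finset.mem_filter, Finset.mem_powerset, Finset.mem_powersetCard]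
          constructor
          · rintro ⟨⟨hsub, -⟩, hc⟩; exact ⟨hsub, hc⟩
          · rintro ⟨hsub, hc⟩; exact ⟨⟨hsub, by rw [hc]; exact hit⟩, hc⟩
        rw [hPf, Finset.sum_congr rfl (fun s hs => by rw [(Finset.mem_powersetCard.mp hs).2]),
          Finset.sum_const, Finset.card_powersetCard, card_univ, Fintype.card_fin, smul_eq_mul]

theorem stmt_4 (n t : ℕ) (kp km : ℤ) (ht : 1 ≤ t) (htn : t + 1 ≤ n)
    (hkm : 0 ≤ km) (hkp : km ≤ kp) (hk0 : ¬(kp = 0 ∧ km = 0))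
    (hlt : ∑ i ∈ Finset.range (t + 1), (n.choose i : ℤ) * (kp + km) ^ i <
      (kp + 1) ^ (t + 1) - (kp - km) ^ (t + 1)) :
    ¬ ∃ T : Set (Fin n → ℤ), Tiles (errBall n t kp km) T := by
  classical
  rintro ⟨T, hT⟩
  set N := t + 1 with hNdef
  have hNn : N ≤ n := htn
  -- decomposition function
  obtain ⟨F, hF⟩ : ∃ F : (Fin n → ℤ) → (Fin n → ℤ) × (Fin n → ℤ),
      ∀ z, (F z).1 ∈ T ∧ (F z).2 ∈ errBall n t kp km ∧ z = (F z).1 + (F z).2 :=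
    ⟨fun z => (hT z).exists.choose, fun z => (hT z).exists.choose_spec⟩
  -- the set A
  set xmax : Fin n → ℤ := fun i => if (i : ℕ) < N then kp else 0 with hxmax
  set xmin : Fin n → ℤ := fun i => if (i : ℕ) < N then km + 1 else 0 with hxmin
  set boxA := Finset.Icc (0 : Fin n → ℤ) xmax with hboxAdef
  set inner := Finset.Icc xmin xmax with hinnerdef
  set A := boxA \ inner with hAdef
  have hboxA : boxA.card = (kp + 1).toNat ^ N := by
    rw [hboxAdef, Pi.card_Icc]
    have hc : ∀ i : Fin n, (Finset.Icc ((0 : Fin n → ℤ) i) (xmax i)).card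
        = if (i : ℕ) < N then (kp + 1).toNat else 1 := by
      intro i
      rw [Int.card_Icc]
      simp only [hxmax, Pi.zero_apply]
      split
      · congr 1; ring
      · norm_num
    rw [Finset.prod_congr rfl fun i _ => hc i, ← Finset.prod_filter, Finset.prod_const,
      filter_val_lt_card hNn]
  have hinner : inner.card = (kp - km).toNat ^ N := by
    rw [hinnerdef, Pi.card_Icc]
    have hc : ∀ i : Fin n, (Finset.Icc (xmin i) (xmax i)).card
        = if (i : ℕ) < N then (kp - km).toNat else 1 := by
      intro i
      rw [Int.card_Icc]
      simp only [hxmax, hxmin]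
      split
      · congr 1; ring
      · norm_num
    rw [Finset.prod_congr rfl fun i _ => hc i, ← Finset.prod_filter, Finset.prod_const,
      filter_val_lt_card hNn]
  have hsubBox : inner ⊆ boxA := by
    apply Finset.Icc_subset_Icc _ le_rfl
    intro i
    simp only [hxmin, Pi.zero_apply]
    split <;> omega
  have hAcard : A.card = (kp + 1).toNat ^ N - (kp - km).toNat ^ N := by
    rw [hAdef, Finset.card_sdiff_of_subset hsubBox, hboxA, hinner]
  -- membership in A
  have hAmem : ∀ x ∈ A, (∀ i, 0 ≤ x i ∧ x i ≤ xmax i) ∧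
      ∃ j : Fin n, (j : ℕ) < N ∧ x j ≤ km := by
    intro x hx
    obtain ⟨hx1, hx2⟩ := Finset.mem_sdiff.mp hx
    rw [hboxAdef, Finset.mem_Icc] at hx1
    have hbd : ∀ i, 0 ≤ x i ∧ x i ≤ xmax i := fun i => ⟨hx1.1 i, hx1.2 i⟩
    refine ⟨hbd, ?_⟩
    by_contra hcon
    push_neg at hcon
    apply hx2
    rw [hinnerdef, Finset.mem_Icc]
    refine ⟨fun i => ?_, hx1.2⟩
    simp only [hxmin]
    split
    · next hiN => have h1 := hcon i hiN; omega
    · exact (hbd i).1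
  -- the injection x ↦ (F x).2
  have hGmem : ∀ x ∈ A, (F x).2 ∈
      ((Finset.Icc (fun _ => -km : Fin n → ℤ) (fun _ => kp)).filter fun y => wt y ≤ t) := by
    intro x _
    obtain ⟨-, hb, -⟩ := hF x
    obtain ⟨hb1, hb2⟩ := hb
    rw [Finset.mem_filter, Finset.mem_Icc]
    exact ⟨⟨fun i => (hb1 i).1, fun i => (hb1 i).2⟩, hb2⟩
  have hGinj : ∀ x ∈ A, ∀ y ∈ A, (F x).2 = (F y).2 → x = y := by
    intro x hxA y hyA hbeq
    obtain ⟨hxbox, jx, hjxN, hjx⟩ := hAmem x hxA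
    obtain ⟨hybox, jy, hjyN, hjy⟩ := hAmem y hyA
    set δ : Fin n → ℤ := fun i => x i - y i with hδdef
    have hxm : ∀ i : Fin n, ¬ ((i : ℕ) < N) → x i ≤ 0 ∧ y i ≤ 0 := by
      intro i hi
      have h1 := (hxbox i).2
      have h2 := (hybox i).2
      simp only [hxmax, if_neg hi] at h1 h2
      exact ⟨h1, h2⟩
    have hδ0 : ∀ i : Fin n, ¬ ((i : ℕ) < N) → δ i = 0 := by
      intro i hi
      have h1 := (hxbox i).1
      have h2 := (hybox i).1
      have h3 := hxm i hi
      simp only [hδdef]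
      omega
    have hxkp : ∀ i : Fin n, x i ≤ kp ∧ y i ≤ kp := by
      intro i
      have h1 := (hxbox i).2
      have h2 := (hybox i).2
      simp only [hxmax] at h1 h2
      constructor <;> (split at h1 <;> split at h2 <;> omega)
    have hδbd : ∀ i, -kp ≤ δ i ∧ δ i ≤ kp := by
      intro i
      have h1 := (hxbox i).1
      have h2 := (hybox i).1
      have h3 := hxkp i
      simp only [hδdef]
      omega
    -- key index selection
    have hkey : ∃ j0 j1 : Fin n, (j0 : ℕ) < N ∧ (j1 : ℕ) < N ∧ -km ≤ δ j0 ∧ δ j1 ≤ km ∧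
        (j0 = j1 → δ j0 = 0) := by
      by_cases hz : ∃ j : Fin n, (j : ℕ) < N ∧ δ j = 0
      · obtain ⟨j, hjN, hj⟩ := hz
        exact ⟨j, j, hjN, hjN, by rw [hj]; omega, by rw [hj]; omega, fun _ => hj⟩
      · push_neg at hz
        have h1n : 1 < n := by omega
        have i0 : Fin n := ⟨0, by omega⟩
        have hN2 : 2 ≤ N := by omega
        by_cases hpos : ∃ j : Fin n, (j : ℕ) < N ∧ 0 < δ j
        · by_cases hneg : ∃ j : Fin n, (j : ℕ) < N ∧ δ j < 0
          · obtain ⟨ja, haN, ha⟩ := hpos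
            obtain ⟨jb, hbN, hb⟩ := hneg
            refine ⟨ja, jb, haN, hbN, by omega, by omega, fun h => ?_⟩
            rw [h] at ha; omega
          · push_neg at hneg
            have hallpos : ∀ j : Fin n, (j : ℕ) < N → 0 < δ j := by
              intro j hj
              have := hneg j hj
              have := hz j hj
              omega
            have hδjx : δ jx ≤ km := by
              have := (hybox jx).1
              simp only [hδdef]
              omega
            obtain ⟨j0, hj0N, hj0ne⟩ : ∃ j0 : Fin n, (j0 : ℕ) < N ∧ j0 ≠ jx := by
              by_cases h : (jx : ℕ) = 0
              · exact ⟨⟨1, by omega⟩, by simpa using (by omega : 1 < N), by simp [Fin.ext_iff, h]⟩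
              · exact ⟨⟨0, by omega⟩, by simpa using (by omega : 0 < N), by simp [Fin.ext_iff]; omega⟩
            have := hallpos j0 hj0N
            exact ⟨j0, jx, hj0N, hjxN, by omega, hδjx, fun h => absurd h hj0ne⟩
        · push_neg at hpos
          have hallneg : ∀ j : Fin n, (j : ℕ) < N → δ j < 0 := by
            intro j hj
            have := hpos j hj
            have := hz j hj
            omega
          have hδjy : -km ≤ δ jy := by
            have := (hxbox jy).1
            simp only [hδdef]
            omega
          obtain ⟨j1, hj1N, hj1ne⟩ : ∃ j1 : Fin n, (j1 : ℕ) < N ∧ j1 ≠ jy := by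
            by_cases h : (jy : ℕ) = 0
            · exact ⟨⟨1, by omega⟩, by simpa using (by omega : 1 < N), by simp [Fin.ext_iff, h]⟩
            · exact ⟨⟨0, by omega⟩, by simpa using (by omega : 0 < N), by simp [Fin.ext_iff]; omega⟩
          have := hallneg j1 hj1N
          exact ⟨jy, j1, hjyN, hj1N, hδjy, by omega, fun h => absurd h.symm hj1ne⟩
    obtain ⟨j0, j1, hj0N, hj1N, hd0, hd1, hdeq⟩ := hkey
    set d : Fin n → ℤ := fun i =>
      if i = j1 then -δ j1 else if i = j0 then 0 else if -km ≤ δ i then 0 else -km - δ i with hddef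
    have hdj0 : d j0 = 0 := by
      by_cases h : j0 = j1
      · have h2 := hdeq h
        rw [h] at h2 ⊢
        simp only [hddef, if_pos rfl]
        omega
      · simp [hddef, if_neg h]
    have hdj1 : d j1 = -δ j1 := by simp only [hddef, if_pos rfl]
    have hdother : ∀ i, i ≠ j0 → i ≠ j1 → d i = if -km ≤ δ i then 0 else -km - δ i := by
      intro i h0 h1
      simp only [hddef, if_neg h1, if_neg h0]
    have hdbd : ∀ i, -km ≤ d i ∧ d i ≤ kp ∧ -km ≤ d i + δ i ∧ d i + δ i ≤ kp := by
      intro i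
      by_cases h1 : i = j1
      · subst h1
        rw [hdj1]
        have := hδbd i
        omega
      · by_cases h0 : i = j0
        · subst h0
          rw [hdj0]
          have := hδbd i
          omega
        · rw [hdother i h0 h1]
          have := hδbd i
          split <;> omega
    have hdwt : wt d ≤ t := by
      have hsub : ∀ i, d i ≠ 0 →
          i ∈ ((univ : Finset (Fin n)).filter fun i : Fin n => (i : ℕ) < N).erase j0 := by
        intro i hi
        rw [Finset.mem_erase, Finset.mem_filter]
        refine ⟨fun h => hi (h ▸ hdj0), mem_univ _, ?_⟩
        by_contra hiN
        apply hi
        have hne1 : i ≠ j1 := fun h => hiN (h ▸ hj1N)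
        have hne0 : i ≠ j0 := fun h => hiN (h ▸ hj0N)
        rw [hdother i hne0 hne1, if_pos (by rw [hδ0 i hiN]; omega)]
      calc wt d ≤ (((univ : Finset (Fin n)).filter fun i : Fin n => (i : ℕ) < N).erase j0).card :=
            wt_le_of_subset hsub
        _ ≤ t := by
            have hj0mem : j0 ∈ (univ : Finset (Fin n)).filter (fun i : Fin n => (i : ℕ) < N) :=
              Finset.mem_filter.mpr ⟨mem_univ _, hj0N⟩
            rw [Finset.card_erase_of_mem hj0mem, filter_val_lt_card hNn]
            omega
    have hd2wt : wt (fun i => d i + δ i) ≤ t := by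
      have hsub : ∀ i, d i + δ i ≠ 0 →
          i ∈ ((univ : Finset (Fin n)).filter fun i : Fin n => (i : ℕ) < N).erase j1 := by
        intro i hi
        rw [Finset.mem_erase, Finset.mem_filter]
        refine ⟨fun h => hi (by rw [h, hdj1]; ring), mem_univ _, ?_⟩
        by_contra hiN
        apply hi
        have hne1 : i ≠ j1 := fun h => hiN (h ▸ hj1N)
        have hne0 : i ≠ j0 := fun h => hiN (h ▸ hj0N)
        have hδi := hδ0 i hiN
        rw [hdother i hne0 hne1, if_pos (by rw [hδi]; omega), hδi]
        ring
      calc wt (fun i => d i + δ i)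
            ≤ (((univ : Finset (Fin n)).filter fun i : Fin n => (i : ℕ) < N).erase j1).card :=
            wt_le_of_subset hsub
        _ ≤ t := by
            have hj1mem : j1 ∈ (univ : Finset (Fin n)).filter (fun i : Fin n => (i : ℕ) < N) :=
              Finset.mem_filter.mpr ⟨mem_univ _, hj1N⟩
            rw [Finset.card_erase_of_mem hj1mem, filter_val_lt_card hNn]
            omega
    have hdB : d ∈ errBall n t kp km := ⟨fun i => ⟨(hdbd i).1, (hdbd i).2.1⟩, hdwt⟩
    have hd2B : (fun i => d i + δ i) ∈ errBall n t kp km :=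
      ⟨fun i => ⟨(hdbd i).2.2.1, (hdbd i).2.2.2⟩, hd2wt⟩
    -- two representations of z
    obtain ⟨hvx, hbx, hzx⟩ := hF x
    obtain ⟨hvy, hby, hzy⟩ := hF y
    have hvdiff : ∀ i, (F x).1 i = (F y).1 i + δ i := by
      intro i
      have h1 := congrFun hzx i
      have h2 := congrFun hzy i
      have h3 := congrFun hbeq i
      simp only [Pi.add_apply] at h1 h2
      simp only [hδdef]
      omega
    set z : Fin n → ℤ := (F x).1 + d with hzdef
    have hp1 : ((F x).1, d).1 ∈ T ∧ ((F x).1, d).2 ∈ errBall n t kp km ∧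
        z = ((F x).1, d).1 + ((F x).1, d).2 := ⟨hvx, hdB, rfl⟩
    have hp2 : (((F y).1, fun i => d i + δ i) : _ × _).1 ∈ T ∧
        (((F y).1, fun i => d i + δ i) : _ × _).2 ∈ errBall n t kp km ∧
        z = ((F y).1, fun i => d i + δ i).1 + ((F y).1, fun i => d i + δ i).2 := by
      refine ⟨hvy, hd2B, ?_⟩
      funext i
      simp only [hzdef, Pi.add_apply]
      rw [hvdiff i]
      ring
    have heqp := (hT z).unique hp1 hp2
    have hveq : (F x).1 = (F y).1 := by
      have := congrArg Prod.fst heqp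
      simpa using this
    funext i
    have h1 := congrFun hzx i
    have h2 := congrFun hzy i
    have h3 := congrFun hbeq i
    have h4 := congrFun hveq i
    simp only [Pi.add_apply] at h1 h2
    omega
  -- conclude
  have hcardle : A.card ≤
      ((Finset.Icc (fun _ => -km : Fin n → ℤ) (fun _ => kp)).filter fun y => wt y ≤ t).card := by
    apply Finset.card_le_card_of_injOn (fun x => (F x).2) hGmem
    intro x hx y hy h
    exact hGinj x (Finset.mem_coe.mp hx) y (Finset.mem_coe.mp hy) h
  have hBle := card_ball_le n t kp km hkm hkp
  -- cast everything to ℤ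
  have e1 : ((kp + 1).toNat : ℤ) = kp + 1 := Int.toNat_of_nonneg (by omega)
  have e2 : ((kp - km).toNat : ℤ) = kp - km := Int.toNat_of_nonneg (by omega)
  have e3 : ((kp + km).toNat : ℤ) = kp + km := Int.toNat_of_nonneg (by omega)
  have hle : (kp - km).toNat ^ N ≤ (kp + 1).toNat ^ N :=
    Nat.pow_le_pow_left (by omega) _
  have hAint : (A.card : ℤ) = (kp + 1) ^ N - (kp - km) ^ N := by
    rw [hAcard, Nat.cast_sub hle, Nat.cast_pow, Nat.cast_pow, e1, e2]
  have hBint : ((((Finset.Icc (fun _ => -km : Fin n → ℤ) (fun _ => kp)).filter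
      fun y => wt y ≤ t).card : ℕ) : ℤ) ≤
      ∑ i ∈ Finset.range (t + 1), (n.choose i : ℤ) * (kp + km) ^ i := by
    calc ((((Finset.Icc (fun _ => -km : Fin n → ℤ) (fun _ => kp)).filter
        fun y => wt y ≤ t).card : ℕ) : ℤ)
        ≤ ((∑ i ∈ Finset.range (t + 1), n.choose i * (kp + km).toNat ^ i : ℕ) : ℤ) := by
          exact_mod_cast hBle
      _ = ∑ i ∈ Finset.range (t + 1), (n.choose i : ℤ) * (kp + km) ^ i := by
          push_cast [e3]
          rfl
  have hfin : (A.card : ℤ) ≤ ∑ i ∈ Finset.range (t + 1), (n.choose i : ℤ) * (kp + km) ^ i :=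
    le_trans (by exact_mod_cast hcardle) hBint
  rw [hAint] at hfin
  rw [← hNdef] at hfin
  exact absurd hfin (not_le.mpr hlt)
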